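/- arXiv:0812.0440 — 2 statements merged into one kernel-verified Lean document; each statement's English description precedes it below -/
import Mathlib

section
/- For every n ≥ 1, the number of pairs (σ,α) of permutations of {1,...,n} generating a transitive subgroup of S_n equals (n−1)! · c_{n+1}, where c_{n+1} is the number of indecomposable permutations of S_{n+1}. -/
/-- A pair of permutations of `{0,...,n-1}` is transitive (a labeled hypermap)
if the subgroup it generates acts transitively. -/
def IsTransitivePair {n : ℕ} (σ α : Equiv.Perm (Fin n)) : Prop :=
  ∀ x y : Fin n, ∃ g ∈ Subgroup.closure ({σ, α} : Set (Equiv.Perm (Fin n))), g x = y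

/-- A permutation of `{0,...,m-1}` is indecomposable if it fixes no proper
initial segment `{0,...,p-1}` (for `1 ≤ p < m`) setwise. -/
def Indecomposable {m : ℕ} (α : Equiv.Perm (Fin m)) : Prop :=
  ∀ p : ℕ, 1 ≤ p → p < m → ∃ i : Fin m, (i : ℕ) < p ∧ p ≤ ((α i : ℕ))

/-- `numIndec m` is the number of indecomposable permutations of `S_m`. -/
noncomputable def numIndec (m : ℕ) : ℕ :=
  Nat.card {α : Equiv.Perm (Fin m) // Indecomposable α}

open Equiv
set_option linter.unusedSectionVars false
set_option linter.unusedVariables false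
open scoped Classical

section Infra
variable {X Y : Type*}

def permCongrMul (e : X ≃ Y) : Perm X ≃* Perm Y :=
  { e.permCongr with
    map_mul' := by intro f g; ext y; simp }

@[simp] lemma permCongrMul_apply (e : X ≃ Y) (f : Perm X) (y : Y) :
    permCongrMul e f y = e (f (e.symm y)) := rfl

lemma perm_pred_iff [Finite X] {f : Perm X} {p : X → Prop}
    (h : ∀ x, p x → p (f x)) : ∀ x, p x ↔ p (f x) := by
  have hinj : Function.Injective (fun y : {x // p x} => (⟨f y, h y y.2⟩ : {x // p x})) := by
    intro a b hab
    exact Subtype.ext (f.injective (congrArg Subtype.val hab))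
  have hs := Finite.injective_iff_surjective.mp hinj
  intro x
  refine ⟨h x, fun hfx => ?_⟩
  obtain ⟨y, hy⟩ := hs ⟨f x, hfx⟩
  have : f y.1 = f x := congrArg Subtype.val hy
  have := f.injective this
  exact this ▸ y.2

variable (p : X → Prop)

noncomputable def splitPerm [Finite X] :
    {f : Perm X // ∀ x, p x → p (f x)} ≃ Perm {x // p x} × Perm {x // ¬ p x} where
  toFun f := (f.1.subtypePerm (fun x => (perm_pred_iff f.2 x).symm),
    f.1.subtypePerm (fun x => not_congr (perm_pred_iff f.2 x).symm))
  invFun bc := ⟨Equiv.Perm.subtypeCongr bc.1 bc.2, by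
    intro x hx
    rw [Equiv.Perm.subtypeCongr.left_apply _ _ hx]
    exact (bc.1 ⟨x, hx⟩).2⟩
  left_inv f := by
    ext x
    by_cases hx : p x
    · rw [Equiv.Perm.subtypeCongr.left_apply _ _ hx]; rfl
    · rw [Equiv.Perm.subtypeCongr.right_apply _ _ hx]; rfl
  right_inv bc := by
    refine Prod.ext ?_ ?_
    · ext x
      simp [Equiv.Perm.subtypeCongr.left_apply _ _ x.2]
    · ext x
      simp [Equiv.Perm.subtypeCongr.right_apply _ _ x.2]

@[simp] lemma splitPerm_fst_apply [Finite X] (f : {f : Perm X // ∀ x, p x → p (f x)})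
    (x : {x // p x}) : (((splitPerm p f).1 x : X)) = f.1 x := rfl

@[simp] lemma splitPerm_snd_apply [Finite X] (f : {f : Perm X // ∀ x, p x → p (f x)})
    (x : {x // ¬ p x}) : (((splitPerm p f).2 x : X)) = f.1 x := rfl

lemma splitPerm_symm_val [Finite X] (bc : Perm {x // p x} × Perm {x // ¬ p x}) :
    ((splitPerm p).symm bc).1 = Equiv.Perm.subtypeCongr bc.1 bc.2 := rfl

end Infra

section Indec

variable {m : ℕ}

def fixesPrefix (α : Perm (Fin m)) (q : ℕ) : Prop :=
  ∀ i : Fin m, (i : ℕ) < q → (α i : ℕ) < q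

lemma not_fixesPrefix_iff (α : Perm (Fin m)) (q : ℕ) :
    ¬ fixesPrefix α q ↔ ∃ i : Fin m, (i : ℕ) < q ∧ q ≤ (α i : ℕ) := by
  unfold fixesPrefix; push_neg; rfl

lemma indec_iff (α : Perm (Fin m)) :
    Indecomposable α ↔ ∀ q, 1 ≤ q → q < m → ¬ fixesPrefix α q := by
  unfold Indecomposable
  refine forall_congr' fun q => forall_congr' fun _ => forall_congr' fun _ => ?_
  rw [not_fixesPrefix_iff]

lemma Dex (α : Perm (Fin (m + 1))) : ∃ q, 1 ≤ q ∧ q ≤ m + 1 ∧ fixesPrefix α q :=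
  ⟨m + 1, Nat.succ_le_succ (Nat.zero_le m), le_refl _, fun i _ => (α i).2⟩

noncomputable def Dfun (α : Perm (Fin (m + 1))) : ℕ := Nat.find (Dex α)

lemma Dfun_eq_iff (α : Perm (Fin (m + 1))) (p : ℕ) (hp1 : 1 ≤ p) (hpm : p ≤ m + 1) :
    Dfun α = p ↔ fixesPrefix α p ∧ ∀ q, 1 ≤ q → q < p → ¬ fixesPrefix α q := by
  rw [Dfun, Nat.find_eq_iff]
  constructor
  · rintro ⟨⟨_, _, h⟩, hmin⟩
    refine ⟨h, fun q hq1 hqp hfix => hmin q hqp ⟨hq1, le_trans (le_of_lt hqp) hpm, hfix⟩⟩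
  · rintro ⟨h, hmin⟩
    refine ⟨⟨hp1, hpm, h⟩, fun q hqp ⟨hq1, _, hfix⟩ => hmin q hq1 hqp hfix⟩

lemma Dfun_mem (α : Perm (Fin (m + 1))) : Dfun α ∈ Finset.Icc 1 (m + 1) := by
  have h1 := (Nat.find_spec (Dex α)).1
  have h2 := (Nat.find_spec (Dex α)).2.1
  exact Finset.mem_Icc.mpr ⟨h1, h2⟩

end Indec
section IndecFiber

variable {m : ℕ} (p : ℕ)

def ePre (hpm : p ≤ m + 1) : {x : Fin (m + 1) // (x : ℕ) < p} ≃ Fin p where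
  toFun x := ⟨x.1.1, x.2⟩
  invFun j := ⟨⟨j.1, lt_of_lt_of_le j.2 hpm⟩, j.2⟩
  left_inv x := by ext; rfl
  right_inv j := by ext; rfl

def eSuf : {x : Fin (m + 1) // ¬ (x : ℕ) < p} ≃ Fin (m + 1 - p) where
  toFun x := ⟨x.1.1 - p, by have := x.1.2; have := x.2; omega⟩
  invFun j := ⟨⟨j.1 + p, by have := j.2; omega⟩, by show ¬ ((j : ℕ) + p < p); omega⟩
  left_inv x := by
    have := x.2
    apply Subtype.ext; apply Fin.ext
    show (x.1.1 - p) + p = x.1.1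
    omega
  right_inv j := by
    apply Fin.ext
    show ((j : ℕ) + p) - p = (j : ℕ)
    omega

lemma indec_transfer (hpm : p ≤ m + 1) (f : {f : Perm (Fin (m + 1)) // ∀ x : Fin (m + 1), (x : ℕ) < p → ((f x : Fin (m+1)) : ℕ) < p}) :
    (∀ q, 1 ≤ q → q < p → ¬ fixesPrefix f.1 q) ↔
      Indecomposable (permCongrMul (ePre p hpm) (splitPerm _ f).1) := by
  rw [indec_iff]
  refine forall_congr' fun q => forall_congr' fun hq1 => forall_congr' fun hqp => ?_
  rw [not_fixesPrefix_iff, not_fixesPrefix_iff]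
  constructor
  · rintro ⟨i, hiq, hqi⟩
    have hip : (i : ℕ) < p := lt_trans hiq hqp
    refine ⟨ePre p hpm ⟨i, hip⟩, hiq, ?_⟩
    have : ((permCongrMul (ePre p hpm) (splitPerm _ f).1) (ePre p hpm ⟨i, hip⟩) : ℕ)
        = (f.1 i : ℕ) := by
      simp only [permCongrMul_apply, Equiv.symm_apply_apply]
      rfl
    rw [this]; exact hqi
  · rintro ⟨j, hjq, hqj⟩
    refine ⟨((ePre p hpm).symm j).1, ?_, ?_⟩
    · have : (((ePre p hpm).symm j).1 : ℕ) = (j : ℕ) := rfl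
      rw [this]; exact hjq
    · have : ((permCongrMul (ePre p hpm) (splitPerm _ f).1) j : ℕ)
        = (f.1 ((ePre p hpm).symm j).1 : ℕ) := by
        simp only [permCongrMul_apply]
        rfl
      rw [this] at hqj; exact hqj

noncomputable def fiberEquiv (hp1 : 1 ≤ p) (hpm : p ≤ m + 1) :
    {α : Perm (Fin (m + 1)) // Dfun α = p} ≃
      {β : Perm (Fin p) // Indecomposable β} × Perm (Fin (m + 1 - p)) :=
  ((Equiv.subtypeEquivRight (fun α => Dfun_eq_iff α p hp1 hpm)).trans
    ((Equiv.subtypeSubtypeEquivSubtypeInter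
      (fun α : Perm (Fin (m+1)) => fixesPrefix α p)
      (fun α => ∀ q, 1 ≤ q → q < p → ¬ fixesPrefix α q)).symm.trans
    ((Equiv.subtypeEquiv
        (q := fun bc : Perm {x : Fin (m+1) // (x : ℕ) < p} × Perm {x : Fin (m+1) // ¬ (x : ℕ) < p}
          => Indecomposable (permCongrMul (ePre p hpm) bc.1))
        (splitPerm (fun x : Fin (m+1) => (x : ℕ) < p))
        (fun f => indec_transfer p hpm f)).trans
    (Equiv.prodSubtypeFstEquivSubtypeProd.trans
    (Equiv.prodCongr
      (Equiv.subtypeEquiv (permCongrMul (ePre p hpm)).toEquiv (fun β => Iff.rfl))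
      (permCongrMul (eSuf (m := m) p)).toEquiv)))))

lemma card_fiber (hp1 : 1 ≤ p) (hpm : p ≤ m + 1) :
    Nat.card {α : Perm (Fin (m + 1)) // Dfun α = p} =
      numIndec p * Nat.factorial (m + 1 - p) := by
  rw [Nat.card_congr (fiberEquiv p hp1 hpm), Nat.card_prod]
  have h2 : Nat.card (Perm (Fin (m + 1 - p))) = (m + 1 - p).factorial := by
    rw [Nat.card_eq_fintype_card, Fintype.card_perm, Fintype.card_fin]
  rw [h2]
  rfl

end IndecFiber
lemma indec_rec (m : ℕ) :
    Nat.factorial (m + 1) =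
      ∑ p ∈ Finset.Icc 1 (m + 1), numIndec p * Nat.factorial (m + 1 - p) := by
  have h0 : Nat.factorial (m + 1) = Nat.card (Perm (Fin (m + 1))) := by
    rw [Nat.card_eq_fintype_card, Fintype.card_perm, Fintype.card_fin]
  rw [h0,
    Nat.card_congr (Equiv.sigmaFiberEquiv (fun α : Perm (Fin (m + 1)) =>
      (⟨Dfun α, Dfun_mem α⟩ : ↥(Finset.Icc 1 (m + 1))))).symm,
    Nat.card_eq_fintype_card, Fintype.card_sigma,
    ← Finset.sum_coe_sort (Finset.Icc 1 (m + 1))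
      (fun p => numIndec p * Nat.factorial (m + 1 - p))]
  refine Finset.sum_congr rfl (fun y _ => ?_)
  rw [← Nat.card_eq_fintype_card,
    Nat.card_congr (Equiv.subtypeEquivRight (fun α : Perm (Fin (m + 1)) =>
      (Subtype.ext_iff :
        (⟨Dfun α, Dfun_mem α⟩ : ↥(Finset.Icc 1 (m + 1))) = y ↔ Dfun α = (y : ℕ))))]
  exact card_fiber (y : ℕ) (Finset.mem_Icc.mp y.2).1 (Finset.mem_Icc.mp y.2).2
section Orbit

def TransPair {X : Type*} (σ α : Perm X) : Prop :=
  ∀ x y : X, ∃ g ∈ Subgroup.closure ({σ, α} : Set (Perm X)), g x = y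

lemma mem_closure_permCongrMul {X Y : Type*} (e : X ≃ Y) (σ α : Perm X) (g : Perm X) :
    g ∈ Subgroup.closure ({σ, α} : Set (Perm X)) ↔
      permCongrMul e g ∈ Subgroup.closure
        ({permCongrMul e σ, permCongrMul e α} : Set (Perm Y)) := by
  have h : (Subgroup.closure ({σ, α} : Set (Perm X))).map (permCongrMul e).toMonoidHom
      = Subgroup.closure ({permCongrMul e σ, permCongrMul e α} : Set (Perm Y)) := by
    rw [MonoidHom.map_closure]
    congr 1
    simp [Set.image_pair]
  rw [← h]
  constructor
  · intro hg; exact ⟨g, hg, rfl⟩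
  · rintro ⟨g', hg', hgg⟩
    have : g' = g := (permCongrMul e).injective hgg
    exact this ▸ hg'

lemma transPair_permCongrMul {X Y : Type*} (e : X ≃ Y) (σ α : Perm X) (h : TransPair σ α) :
    TransPair (permCongrMul e σ) (permCongrMul e α) := by
  intro x y
  obtain ⟨g, hg, hgxy⟩ := h (e.symm x) (e.symm y)
  exact ⟨permCongrMul e g, (mem_closure_permCongrMul e σ α g).mp hg, by simp [hgxy]⟩

variable {X : Type*} [Finite X] (p : X → Prop)

local notation "Φ" => Equiv.Perm.subtypeCongrHom p

lemma closure_pair_map (b₁ b₂ : Perm {x // p x} × Perm {x // ¬ p x}) :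
    Subgroup.closure ({Φ b₁, Φ b₂} : Set (Perm X)) =
      Subgroup.map (Φ) (Subgroup.closure {b₁, b₂}) := by
  rw [MonoidHom.map_closure, Set.image_pair]

lemma closure_pair_fst (b₁ b₂ : Perm {x // p x} × Perm {x // ¬ p x}) :
    Subgroup.map (MonoidHom.fst _ _) (Subgroup.closure {b₁, b₂}) =
      Subgroup.closure {b₁.1, b₂.1} := by
  rw [MonoidHom.map_closure, Set.image_pair]; rfl

lemma exists_of_mem_closure_pair {b₁ b₂ : Perm {x // p x} × Perm {x // ¬ p x}}
    {g : Perm X} (hg : g ∈ Subgroup.closure ({Φ b₁, Φ b₂} : Set (Perm X))) :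
    ∃ b ∈ Subgroup.closure {b₁, b₂}, Φ b = g := by
  rw [closure_pair_map] at hg
  exact hg

lemma mem_closure_pair_of {b₁ b₂ b : Perm {x // p x} × Perm {x // ¬ p x}}
    (hb : b ∈ Subgroup.closure {b₁, b₂}) :
    Φ b ∈ Subgroup.closure ({Φ b₁, Φ b₂} : Set (Perm X)) := by
  rw [closure_pair_map]
  exact ⟨b, hb, rfl⟩

lemma fst_mem_of_mem_closure_pair {b₁ b₂ b : Perm {x // p x} × Perm {x // ¬ p x}}
    (hb : b ∈ Subgroup.closure {b₁, b₂}) :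
    b.1 ∈ Subgroup.closure {b₁.1, b₂.1} := by
  rw [← closure_pair_fst]
  exact ⟨b, hb, rfl⟩

lemma exists_snd_of_fst_mem {b₁ b₂ : Perm {x // p x} × Perm {x // ¬ p x}}
    {β : Perm {x // p x}} (hβ : β ∈ Subgroup.closure {b₁.1, b₂.1}) :
    ∃ c, (β, c) ∈ Subgroup.closure {b₁, b₂} := by
  rw [← closure_pair_fst] at hβ
  obtain ⟨b, hb, hfst⟩ := hβ
  refine ⟨b.2, ?_⟩
  have : (β, b.2) = b := Prod.ext hfst.symm rfl
  rwa [this]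

lemma Phi_apply_mem {b : Perm {x // p x} × Perm {x // ¬ p x}} {x : X} (hx : p x) :
    Φ b x = (b.1 ⟨x, hx⟩ : X) :=
  Equiv.Perm.subtypeCongr.left_apply _ _ hx

lemma Phi_splitPerm (f : {f : Perm X // ∀ x, p x → p (f x)}) :
    Φ (splitPerm p f) = f.1 := by
  have h := congrArg Subtype.val (Equiv.symm_apply_apply (splitPerm p) f)
  rw [splitPerm_symm_val] at h
  calc Φ (splitPerm p f)
      = Equiv.Perm.subtypeCongr ((splitPerm p) f).1 ((splitPerm p) f).2 := by
        simp [Equiv.Perm.subtypeCongrHom]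
    _ = f.1 := h

end Orbit
section Orbit2

variable {X : Type*} [Finite X] (x0 : X)

def orbP (σ α : Perm X) (x : X) : Prop :=
  ∃ g ∈ Subgroup.closure ({σ, α} : Set (Perm X)), g x0 = x

lemma orbP_base (σ α : Perm X) : orbP x0 σ α x0 := ⟨1, one_mem _, rfl⟩

lemma mem_closure_left (σ α : Perm X) : σ ∈ Subgroup.closure ({σ, α} : Set (Perm X)) :=
  Subgroup.subset_closure (Set.mem_insert _ _)

lemma mem_closure_right (σ α : Perm X) : α ∈ Subgroup.closure ({σ, α} : Set (Perm X)) :=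
  Subgroup.subset_closure (Set.mem_insert_of_mem _ rfl)

lemma orbP_pres {σ α g : Perm X} (hg : g ∈ Subgroup.closure ({σ, α} : Set (Perm X)))
    {x : X} (hx : orbP x0 σ α x) : orbP x0 σ α (g x) := by
  obtain ⟨h, hh, hhx⟩ := hx
  exact ⟨g * h, mul_mem hg hh, by rw [Equiv.Perm.mul_apply, hhx]⟩

variable (p : X → Prop)

lemma pres_left {σ α : Perm X} (h : ∀ x, orbP x0 σ α x ↔ p x) :
    ∀ x, p x → p (σ x) :=
  fun x hx => (h _).mp (orbP_pres x0 (mem_closure_left σ α) ((h x).mpr hx))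

lemma pres_right {σ α : Perm X} (h : ∀ x, orbP x0 σ α x ↔ p x) :
    ∀ x, p x → p (α x) :=
  fun x hx => (h _).mp (orbP_pres x0 (mem_closure_right σ α) ((h x).mpr hx))

lemma trans_of_orbEq {σ α : Perm X} (h1 : ∀ x, p x → p (σ x)) (h2 : ∀ x, p x → p (α x))
    (horb : ∀ x, orbP x0 σ α x ↔ p x) :
    TransPair (splitPerm p ⟨σ, h1⟩).1 (splitPerm p ⟨α, h2⟩).1 := by
  intro x y
  obtain ⟨g1, hg1, hg1x⟩ := (horb x.1).mpr x.2
  obtain ⟨g2, hg2, hg2y⟩ := (horb y.1).mpr y.2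
  have hσ : σ = Equiv.Perm.subtypeCongrHom p (splitPerm p ⟨σ, h1⟩) :=
    (Phi_splitPerm p ⟨σ, h1⟩).symm
  have hα : α = Equiv.Perm.subtypeCongrHom p (splitPerm p ⟨α, h2⟩) :=
    (Phi_splitPerm p ⟨α, h2⟩).symm
  have hg : g2 * g1⁻¹ ∈ Subgroup.closure ({σ, α} : Set (Perm X)) :=
    mul_mem hg2 (inv_mem hg1)
  rw [hσ, hα] at hg
  obtain ⟨b, hb, hΦb⟩ := exists_of_mem_closure_pair p hg
  refine ⟨b.1, fst_mem_of_mem_closure_pair p hb, ?_⟩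
  apply Subtype.ext
  have : (b.1 x : X) = Equiv.Perm.subtypeCongrHom p b x.1 :=
    (Phi_apply_mem p x.2).symm
  rw [this, hΦb, ← hg1x, Equiv.Perm.mul_apply, Equiv.Perm.inv_def, Equiv.symm_apply_apply, hg2y]

lemma orbEq_of_trans (hp0 : p x0) (b₁ b₂ : Perm {x // p x} × Perm {x // ¬ p x})
    (htrans : TransPair b₁.1 b₂.1) :
    ∀ x, orbP x0 (Equiv.Perm.subtypeCongrHom p b₁) (Equiv.Perm.subtypeCongrHom p b₂) x ↔ p x := by
  intro x
  constructor
  · rintro ⟨g, hg, hgx⟩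
    obtain ⟨b, hb, hΦb⟩ := exists_of_mem_closure_pair p hg
    rw [← hgx, ← hΦb, Phi_apply_mem p hp0]
    exact (b.1 ⟨x0, hp0⟩).2
  · intro hx
    obtain ⟨β, hβ, hβx⟩ := htrans ⟨x0, hp0⟩ ⟨x, hx⟩
    obtain ⟨c, hc⟩ := exists_snd_of_fst_mem p hβ
    refine ⟨Equiv.Perm.subtypeCongrHom p (β, c), mem_closure_pair_of p hc, ?_⟩
    rw [Phi_apply_mem p hp0]
    exact congrArg Subtype.val hβx

end Orbit2
section Orbit3

variable {X : Type*} [Finite X] (x0 : X) (p : X → Prop)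

lemma splitPerm_Phi (b : Perm {x // p x} × Perm {x // ¬ p x})
    (h : ∀ x, p x → p ((Equiv.Perm.subtypeCongrHom p b) x)) :
    splitPerm p ⟨Equiv.Perm.subtypeCongrHom p b, h⟩ = b := by
  have : (⟨Equiv.Perm.subtypeCongrHom p b, h⟩ : {f : Perm X // ∀ x, p x → p (f x)}) =
      (splitPerm p).symm b := Subtype.ext (by rw [splitPerm_symm_val]; rfl)
  rw [this, Equiv.apply_symm_apply]

lemma splitPerm_Phi' (β : Perm {x // p x}) (γ : Perm {x // ¬ p x})
    (h : ∀ x, p x → p ((Equiv.Perm.subtypeCongr β γ) x)) :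
    splitPerm p ⟨Equiv.Perm.subtypeCongr β γ, h⟩ = (β, γ) := by
  have : (⟨Equiv.Perm.subtypeCongr β γ, h⟩ : {f : Perm X // ∀ x, p x → p (f x)}) =
      (splitPerm p).symm (β, γ) := Subtype.ext (by rw [splitPerm_symm_val])
  rw [this, Equiv.apply_symm_apply]

noncomputable def orbitFiberEquiv (hp0 : p x0) :
    {P : Perm X × Perm X // ∀ x, orbP x0 P.1 P.2 x ↔ p x} ≃
      ({T : Perm {x // p x} × Perm {x // p x} // TransPair T.1 T.2} ×
        (Perm {x // ¬ p x} × Perm {x // ¬ p x})) where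
  toFun P :=
    (⟨((splitPerm p ⟨P.1.1, pres_left x0 p P.2⟩).1,
       (splitPerm p ⟨P.1.2, pres_right x0 p P.2⟩).1),
      trans_of_orbEq x0 p _ _ P.2⟩,
     ((splitPerm p ⟨P.1.1, pres_left x0 p P.2⟩).2,
      (splitPerm p ⟨P.1.2, pres_right x0 p P.2⟩).2))
  invFun Q :=
    ⟨(Equiv.Perm.subtypeCongrHom p (Q.1.1.1, Q.2.1),
      Equiv.Perm.subtypeCongrHom p (Q.1.1.2, Q.2.2)),
     orbEq_of_trans x0 p hp0 _ _ Q.1.2⟩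
  left_inv P := by
    apply Subtype.ext
    exact Prod.ext (Phi_splitPerm p ⟨P.1.1, pres_left x0 p P.2⟩)
      (Phi_splitPerm p ⟨P.1.2, pres_right x0 p P.2⟩)
  right_inv Q := by
    obtain ⟨⟨⟨β₁, β₂⟩, hT⟩, ⟨γ₁, γ₂⟩⟩ := Q
    refine Prod.ext (Subtype.ext (Prod.ext ?_ ?_)) (Prod.ext ?_ ?_) <;>
      simp [splitPerm_Phi']

end Orbit3
section TransCount

lemma transPair_congr {X Y : Type*} (e : X ≃ Y) (σ α : Perm X) :
    TransPair (permCongrMul e σ) (permCongrMul e α) ↔ TransPair σ α := by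
  refine ⟨fun h => ?_, transPair_permCongrMul e σ α⟩
  have h3 := transPair_permCongrMul e.symm _ _ h
  have h2 : ∀ f : Perm X, permCongrMul e.symm (permCongrMul e f) = f := by
    intro f; ext x; simp
  rwa [h2, h2] at h3

noncomputable def numTrans (k : ℕ) : ℕ :=
  Nat.card {P : Perm (Fin k) × Perm (Fin k) // TransPair P.1 P.2}

variable {m : ℕ}

noncomputable def orbFinset (P : Perm (Fin (m + 1)) × Perm (Fin (m + 1))) :
    Finset (Fin (m + 1)) :=
  Finset.univ.filter (orbP 0 P.1 P.2)

lemma mem_orbFinset (P : Perm (Fin (m + 1)) × Perm (Fin (m + 1))) (x : Fin (m + 1)) :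
    x ∈ orbFinset P ↔ orbP 0 P.1 P.2 x := by
  simp [orbFinset]

lemma zero_mem_orbFinset (P : Perm (Fin (m + 1)) × Perm (Fin (m + 1))) :
    (0 : Fin (m + 1)) ∈ orbFinset P :=
  (mem_orbFinset P 0).mpr (orbP_base 0 P.1 P.2)

/-- The subtype of permutation pairs on a coerced finset with transitive restriction,
counted. -/
lemma card_transPair_subtype (S : Finset (Fin (m + 1))) :
    Nat.card {T : Perm {x // x ∈ S} × Perm {x // x ∈ S} // TransPair T.1 T.2} =
      numTrans S.card := by
  have eS : {x : Fin (m + 1) // x ∈ S} ≃ Fin S.card :=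
    (Fintype.equivFin _).trans (finCongr (by simp [Fintype.card_coe]))
  refine Nat.card_congr (Equiv.subtypeEquiv
    (Equiv.prodCongr (permCongrMul eS).toEquiv (permCongrMul eS).toEquiv) ?_)
  intro T
  exact (transPair_congr eS T.1 T.2).symm

lemma card_perm_compl (S : Finset (Fin (m + 1))) :
    Nat.card (Perm {x : Fin (m + 1) // ¬ x ∈ S} × Perm {x : Fin (m + 1) // ¬ x ∈ S}) =
      Nat.factorial (m + 1 - S.card) * Nat.factorial (m + 1 - S.card) := by
  have hc : Fintype.card {x : Fin (m + 1) // ¬ x ∈ S} = m + 1 - S.card := by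
    rw [Fintype.card_subtype_compl]
    simp [Fintype.card_coe]
  rw [Nat.card_prod, Nat.card_eq_fintype_card, Fintype.card_perm, hc]

lemma card_orb_fiber (S : Finset (Fin (m + 1))) (h0 : (0 : Fin (m + 1)) ∈ S) :
    Nat.card {P : Perm (Fin (m + 1)) × Perm (Fin (m + 1)) // orbFinset P = S} =
      numTrans S.card * (Nat.factorial (m + 1 - S.card) * Nat.factorial (m + 1 - S.card)) := by
  have e1 : {P : Perm (Fin (m + 1)) × Perm (Fin (m + 1)) // orbFinset P = S} ≃
      {P : Perm (Fin (m + 1)) × Perm (Fin (m + 1)) // ∀ x, orbP 0 P.1 P.2 x ↔ x ∈ S} := by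
    refine Equiv.subtypeEquivRight (fun P => ?_)
    rw [Finset.ext_iff]
    exact forall_congr' fun x => by rw [mem_orbFinset]
  rw [Nat.card_congr (e1.trans (orbitFiberEquiv 0 (fun x => x ∈ S) h0)), Nat.card_prod,
    card_transPair_subtype, card_perm_compl]

lemma card_filter_card_eq (k : ℕ) (hk1 : 1 ≤ k) :
    ((Finset.univ.filter (fun S : Finset (Fin (m + 1)) => (0 : Fin (m + 1)) ∈ S)).filter
      (fun S => S.card = k)).card = Nat.choose m (k - 1) := by
  have hm : (Finset.univ.erase (0 : Fin (m + 1))).card = m := by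
    rw [Finset.card_erase_of_mem (Finset.mem_univ _)]
    simp
  have key : ((Finset.univ.filter (fun S : Finset (Fin (m + 1)) => (0 : Fin (m + 1)) ∈ S)).filter
      (fun S => S.card = k)).card =
      (Finset.powersetCard (k - 1) (Finset.univ.erase (0 : Fin (m + 1)))).card := by
    refine Finset.card_bij' (fun (S : Finset (Fin (m+1))) _ => S.erase 0)
      (fun (t : Finset (Fin (m+1))) _ => insert 0 t) ?_ ?_ ?_ ?_
    · intro S hS
      simp only [Finset.mem_filter, Finset.mem_univ, true_and] at hS
      rw [Finset.mem_powersetCard]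
      exact ⟨Finset.erase_subset_erase _ (Finset.subset_univ S),
        by rw [Finset.card_erase_of_mem hS.1, hS.2]⟩
    · intro t ht
      rw [Finset.mem_powersetCard] at ht
      have h0t : (0 : Fin (m + 1)) ∉ t := fun h =>
        (Finset.mem_erase.mp (ht.1 h)).1 rfl
      simp only [Finset.mem_filter, Finset.mem_univ, true_and]
      exact ⟨Finset.mem_insert_self _ _,
        by rw [Finset.card_insert_of_notMem h0t, ht.2]; omega⟩
    · intro S hS
      simp only [Finset.mem_filter, Finset.mem_univ, true_and] at hS
      exact Finset.insert_erase hS.1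
    · intro t ht
      rw [Finset.mem_powersetCard] at ht
      have h0t : (0 : Fin (m + 1)) ∉ t := fun h =>
        (Finset.mem_erase.mp (ht.1 h)).1 rfl
      exact Finset.erase_insert h0t
  rw [key, Finset.card_powersetCard, hm]

lemma trans_rec :
    Nat.factorial (m + 1) * Nat.factorial (m + 1) =
      ∑ k ∈ Finset.Icc 1 (m + 1), Nat.choose m (k - 1) *
        (numTrans k * (Nat.factorial (m + 1 - k) * Nat.factorial (m + 1 - k))) := by
  set A := Finset.univ.filter (fun S : Finset (Fin (m + 1)) => (0 : Fin (m + 1)) ∈ S) with hA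
  set f : Finset (Fin (m + 1)) → ℕ := fun S =>
    numTrans S.card * (Nat.factorial (m + 1 - S.card) * Nat.factorial (m + 1 - S.card)) with hf
  have hF : ∀ P : Perm (Fin (m + 1)) × Perm (Fin (m + 1)), orbFinset P ∈ A := fun P => by
    simp only [hA, Finset.mem_filter, Finset.mem_univ, true_and]
    exact zero_mem_orbFinset P
  have h0 : Nat.factorial (m + 1) * Nat.factorial (m + 1) =
      Nat.card (Perm (Fin (m + 1)) × Perm (Fin (m + 1))) := by
    rw [Nat.card_prod, Nat.card_eq_fintype_card, Fintype.card_perm, Fintype.card_fin]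
  rw [h0, Nat.card_congr (Equiv.sigmaFiberEquiv
      (fun P : Perm (Fin (m + 1)) × Perm (Fin (m + 1)) => (⟨orbFinset P, hF P⟩ : ↥A))).symm,
    Nat.card_eq_fintype_card, Fintype.card_sigma]
  have hfib : ∀ y : ↥A,
      Fintype.card {P : Perm (Fin (m + 1)) × Perm (Fin (m + 1)) //
        (⟨orbFinset P, hF P⟩ : ↥A) = y} = f y.1 := by
    intro y
    have hy0 : (0 : Fin (m + 1)) ∈ y.1 := by
      have := y.2
      simp only [hA, Finset.mem_filter, Finset.mem_univ, true_and] at this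
      exact this
    rw [← Nat.card_eq_fintype_card,
      Nat.card_congr (Equiv.subtypeEquivRight
        (fun P : Perm (Fin (m + 1)) × Perm (Fin (m + 1)) =>
          (Subtype.ext_iff : (⟨orbFinset P, hF P⟩ : ↥A) = y ↔ orbFinset P = y.1)))]
    exact card_orb_fiber y.1 hy0
  rw [Finset.sum_congr rfl (fun y _ => hfib y), Finset.sum_coe_sort A f]
  have hmaps : ∀ S ∈ A, S.card ∈ Finset.Icc 1 (m + 1) := by
    intro S hS
    simp only [hA, Finset.mem_filter, Finset.mem_univ, true_and] at hS
    refine Finset.mem_Icc.mpr ⟨Finset.card_pos.mpr ⟨0, hS⟩, ?_⟩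
    calc S.card ≤ Fintype.card (Fin (m + 1)) := Finset.card_le_univ S
      _ = m + 1 := Fintype.card_fin _
  rw [← Finset.sum_fiberwise_of_maps_to hmaps f]
  refine Finset.sum_congr rfl (fun k hk => ?_)
  have hk1 : 1 ≤ k := (Finset.mem_Icc.mp hk).1
  have hconst : ∀ S ∈ A.filter (fun S => S.card = k), f S = numTrans k *
      (Nat.factorial (m + 1 - k) * Nat.factorial (m + 1 - k)) := by
    intro S hS
    simp only [Finset.mem_filter] at hS
    simp only [hf, hS.2]
  rw [Finset.sum_congr rfl hconst, Finset.sum_const, smul_eq_mul, card_filter_card_eq k hk1]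

end TransCount
section Final

lemma numIndec_one : numIndec 1 = 1 := by
  have h : ∀ α : Equiv.Perm (Fin 1), Indecomposable α := by
    intro α p hp1 hp
    omega
  rw [numIndec, Nat.card_congr (Equiv.subtypeUnivEquiv h), Nat.card_eq_fintype_card,
    Fintype.card_perm, Fintype.card_fin, Nat.factorial_one]

lemma A_identity (m : ℕ) :
    ∑ k ∈ Finset.Icc 1 (m + 1), Nat.choose m (k - 1) *
        ((Nat.factorial (k - 1) * numIndec (k + 1)) *
          (Nat.factorial (m + 1 - k) * Nat.factorial (m + 1 - k))) =
      Nat.factorial (m + 1) * Nat.factorial (m + 1) := by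
  have hterm : ∀ k ∈ Finset.Icc 1 (m + 1),
      Nat.choose m (k - 1) * ((Nat.factorial (k - 1) * numIndec (k + 1)) *
        (Nat.factorial (m + 1 - k) * Nat.factorial (m + 1 - k))) =
      Nat.factorial m * (numIndec (k + 1) * Nat.factorial (m + 1 - k)) := by
    intro k hk
    rw [Finset.mem_Icc] at hk
    have hkle : k - 1 ≤ m := by omega
    have hcc : Nat.choose m (k - 1) * Nat.factorial (k - 1) * Nat.factorial (m - (k - 1)) =
        Nat.factorial m := Nat.choose_mul_factorial_mul_factorial hkle
    have hmk : m - (k - 1) = m + 1 - k := by omega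
    rw [hmk] at hcc
    calc Nat.choose m (k - 1) * ((Nat.factorial (k - 1) * numIndec (k + 1)) *
          (Nat.factorial (m + 1 - k) * Nat.factorial (m + 1 - k)))
        = (Nat.choose m (k - 1) * Nat.factorial (k - 1) * Nat.factorial (m + 1 - k)) *
            (numIndec (k + 1) * Nat.factorial (m + 1 - k)) := by ring
      _ = Nat.factorial m * (numIndec (k + 1) * Nat.factorial (m + 1 - k)) := by rw [hcc]
  rw [Finset.sum_congr rfl hterm, ← Finset.mul_sum]
  -- Use the indecomposable recurrence at m + 1
  have hrec := indec_rec (m + 1)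
  have hsplit : ∑ p ∈ Finset.Icc 1 (m + 2), numIndec p * Nat.factorial (m + 2 - p) =
      numIndec 1 * Nat.factorial (m + 1) +
        ∑ p ∈ Finset.Icc 2 (m + 2), numIndec p * Nat.factorial (m + 2 - p) := by
    have h1 : Finset.Icc 1 (m + 2) = insert 1 (Finset.Icc 2 (m + 2)) := by
      ext x
      simp only [Finset.mem_Icc, Finset.mem_insert]
      omega
    rw [h1, Finset.sum_insert (by simp [Finset.mem_Icc])]
    norm_num
  have hreindex : ∑ p ∈ Finset.Icc 2 (m + 2), numIndec p * Nat.factorial (m + 2 - p) =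
      ∑ k ∈ Finset.Icc 1 (m + 1), numIndec (k + 1) * Nat.factorial (m + 1 - k) := by
    rw [show (2 : ℕ) = 1 + 1 from rfl, show m + 2 = (m + 1) + 1 from rfl,
      ← Finset.map_add_right_Icc 1 (m + 1) 1, Finset.sum_map]
    refine Finset.sum_congr rfl (fun k hk => ?_)
    rw [Finset.mem_Icc] at hk
    have h1 : (addRightEmbedding 1) k = k + 1 := rfl
    rw [h1]
    have h2 : m + 1 + 1 - (k + 1) = m + 1 - k := by omega
    rw [h2]
  rw [hsplit, numIndec_one, one_mul, hreindex] at hrec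
  -- hrec : (m+2)! = (m+1)! + S0
  have key : Nat.factorial m * (Nat.factorial (m + 1) +
      ∑ k ∈ Finset.Icc 1 (m + 1), numIndec (k + 1) * Nat.factorial (m + 1 - k)) =
      Nat.factorial m * Nat.factorial (m + 2) := by rw [← hrec]
  rw [Nat.mul_add] at key
  have hexp : Nat.factorial m * Nat.factorial (m + 2) =
      Nat.factorial m * Nat.factorial (m + 1) +
        Nat.factorial (m + 1) * Nat.factorial (m + 1) := by
    rw [Nat.factorial_succ (m + 1)]
    have : Nat.factorial (m + 1) = Nat.factorial m * (m + 1) := by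
      rw [Nat.factorial_succ, Nat.mul_comm]
    calc Nat.factorial m * ((m + 2) * Nat.factorial (m + 1))
        = Nat.factorial m * Nat.factorial (m + 1) +
          (Nat.factorial m * (m + 1)) * Nat.factorial (m + 1) := by ring
      _ = _ := by rw [← this]
  rw [hexp] at key
  exact Nat.add_left_cancel key

lemma numTrans_eq (m : ℕ) :
    numTrans (m + 1) = Nat.factorial m * numIndec (m + 2) := by
  induction m using Nat.strong_induction_on with
  | _ m ih =>
    have hT := trans_rec (m := m)
    have hA := A_identity m
    have hsplitT := Finset.sum_Icc_succ_top (a := 1) (b := m) (by omega)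
      (fun k => Nat.choose m (k - 1) *
        (numTrans k * (Nat.factorial (m + 1 - k) * Nat.factorial (m + 1 - k))))
    have hsplitA := Finset.sum_Icc_succ_top (a := 1) (b := m) (by omega)
      (fun k => Nat.choose m (k - 1) *
        ((Nat.factorial (k - 1) * numIndec (k + 1)) *
          (Nat.factorial (m + 1 - k) * Nat.factorial (m + 1 - k))))
    rw [hsplitT] at hT
    rw [hsplitA] at hA
    have hagree : ∑ k ∈ Finset.Icc 1 m, Nat.choose m (k - 1) *
        (numTrans k * (Nat.factorial (m + 1 - k) * Nat.factorial (m + 1 - k))) =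
        ∑ k ∈ Finset.Icc 1 m, Nat.choose m (k - 1) *
        ((Nat.factorial (k - 1) * numIndec (k + 1)) *
          (Nat.factorial (m + 1 - k) * Nat.factorial (m + 1 - k))) := by
      refine Finset.sum_congr rfl (fun k hk => ?_)
      rw [Finset.mem_Icc] at hk
      obtain ⟨j, rfl⟩ : ∃ j, k = j + 1 := ⟨k - 1, by omega⟩
      have := ih j (by omega)
      rw [this]
      simp
    rw [hagree] at hT
    have hfin : Nat.choose m (m + 1 - 1) *
        (numTrans (m + 1) * (Nat.factorial (m + 1 - (m + 1)) * Nat.factorial (m + 1 - (m + 1)))) =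
        Nat.choose m (m + 1 - 1) *
        ((Nat.factorial (m + 1 - 1) * numIndec (m + 1 + 1)) *
          (Nat.factorial (m + 1 - (m + 1)) * Nat.factorial (m + 1 - (m + 1)))) := by
      have h1 := hT.symm.trans hA.symm
      exact Nat.add_left_cancel h1
    simp only [Nat.add_sub_cancel, Nat.sub_self, Nat.choose_self, Nat.factorial_zero,
      one_mul, mul_one] at hfin
    exact hfin

end Final

theorem labeled_hypermaps_eq_factorial_mul_indec (n : ℕ) (hn : 1 ≤ n) :
    Nat.card {P : Equiv.Perm (Fin n) × Equiv.Perm (Fin n) // IsTransitivePair P.1 P.2} =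
      Nat.factorial (n - 1) * numIndec (n + 1) := by
  obtain ⟨m, rfl⟩ : ∃ m, n = m + 1 := ⟨n - 1, by omega⟩
  have h : Nat.card {P : Equiv.Perm (Fin (m + 1)) × Equiv.Perm (Fin (m + 1)) //
      IsTransitivePair P.1 P.2} = numTrans (m + 1) :=
    Nat.card_congr (Equiv.subtypeEquivRight (fun P => Iff.rfl))
  rw [h, numTrans_eq m]
  norm_num
end

section
/- For every m ≥ 1, the number of pairs (σ,α) of permutations of {1,...,2m} such that α is a fixed point free involution and the subgroup generated by σ and α acts transitively on {1,...,2m} equals (2m−1)! · i_{m+1}, where i_{m+1} is the number of indecomposable fixed point free involutions of S_{2m+2}. -/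
/-- `numIndecFPFInv m` is the number of indecomposable fixed point free
involutions of `S_{2m}`. -/
noncomputable def numIndecFPFInv (m : ℕ) : ℕ :=
  Nat.card {α : Equiv.Perm (Fin (2 * m)) //
    Indecomposable α ∧ α * α = 1 ∧ ∀ x, α x ≠ x}

open Equiv Finset
namespace LMaux

/-- fixed point free involution predicate -/
def FPFI {β : Type*} (a : Equiv.Perm β) : Prop := a * a = 1 ∧ ∀ x, a x ≠ x

/-- `Equiv.permCongr` as a `MulEquiv`. -/
def pcongr {β γ : Type*} (e : β ≃ γ) : Equiv.Perm β ≃* Equiv.Perm γ :=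
  { Equiv.permCongr e with
    map_mul' := fun f g => by
      ext x
      simp [Equiv.permCongr_apply] }

@[simp] lemma pcongr_apply {β γ : Type*} (e : β ≃ γ) (f : Equiv.Perm β) (x : γ) :
    pcongr e f x = e (f (e.symm x)) := rfl

@[simp] lemma pcongr_symm_apply {β γ : Type*} (e : β ≃ γ) (f : Equiv.Perm γ) (x : β) :
    (pcongr e).symm f x = e.symm (f (e x)) := rfl

lemma pcongr_symm {β γ : Type*} (e : β ≃ γ) : (pcongr e).symm = pcongr e.symm := by
  apply MulEquiv.toEquiv_injective
  apply Equiv.ext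
  intro f
  apply Equiv.ext
  intro x
  rfl

lemma FPFI_pcongr {β γ : Type*} (e : β ≃ γ) (f : Equiv.Perm β) :
    FPFI (pcongr e f) ↔ FPFI f := by
  constructor
  · rintro ⟨h1, h2⟩
    refine ⟨(pcongr e).injective ?_, fun x hx => h2 (e x) ?_⟩
    · rw [map_mul, h1, map_one]
    · simp [hx]
  · rintro ⟨h1, h2⟩
    refine ⟨by rw [← map_mul, h1, map_one], fun x hx => h2 (e.symm x) ?_⟩
    have := congrArg e.symm hx
    simpa using this

section Split

variable {β : Type*} (p : β → Prop) [DecidablePred p]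

/-- Combining permutations of `{x // p x}` and `{x // ¬ p x}` into a permutation of `β`,
as a monoid hom. -/
def jn : Equiv.Perm {x // p x} × Equiv.Perm {x // ¬ p x} →* Equiv.Perm β where
  toFun ab := Equiv.Perm.subtypeCongr ab.1 ab.2
  map_one' := by
    ext x
    by_cases h : p x <;>
      simp [Equiv.Perm.subtypeCongr.left_apply, Equiv.Perm.subtypeCongr.right_apply, h]
  map_mul' ab cd := by
    ext x
    by_cases h : p x
    · rw [Equiv.Perm.mul_apply,
        Equiv.Perm.subtypeCongr.left_apply _ _ h,
        Equiv.Perm.subtypeCongr.left_apply _ _ h,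
        Equiv.Perm.subtypeCongr.left_apply_subtype]
      rfl
    · rw [Equiv.Perm.mul_apply,
        Equiv.Perm.subtypeCongr.right_apply _ _ h,
        Equiv.Perm.subtypeCongr.right_apply _ _ h,
        Equiv.Perm.subtypeCongr.right_apply_subtype]
      rfl

lemma jn_left (ab : Equiv.Perm {x // p x} × Equiv.Perm {x // ¬ p x}) {x : β} (h : p x) :
    jn p ab x = ab.1 ⟨x, h⟩ := Equiv.Perm.subtypeCongr.left_apply _ _ h

lemma jn_right (ab : Equiv.Perm {x // p x} × Equiv.Perm {x // ¬ p x}) {x : β} (h : ¬ p x) :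
    jn p ab x = ab.2 ⟨x, h⟩ := Equiv.Perm.subtypeCongr.right_apply _ _ h

lemma jn_injective : Function.Injective (jn p) := by
  intro ab cd h
  have h1 : ab.1 = cd.1 := by
    ext y
    have := congrArg (fun π : Equiv.Perm β => π y) h
    simp only [jn_left p _ y.2, Subtype.coe_eta] at this
    exact congrArg Subtype.val (Subtype.ext this : ab.1 y = cd.1 y) |>.symm ▸ rfl
  have h2 : ab.2 = cd.2 := by
    ext y
    have := congrArg (fun π : Equiv.Perm β => π y) h
    simp only [jn_right p _ y.2, Subtype.coe_eta] at this
    exact congrArg Subtype.val (Subtype.ext this : ab.2 y = cd.2 y) |>.symm ▸ rfl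
  exact Prod.ext h1 h2

lemma jn_pres (ab : Equiv.Perm {x // p x} × Equiv.Perm {x // ¬ p x}) (x : β) :
    p (jn p ab x) ↔ p x := by
  by_cases h : p x
  · simp only [jn_left p ab h, h, iff_true]
    exact (ab.1 ⟨x, h⟩).2
  · simp only [jn_right p ab h, h, iff_false]
    exact (ab.2 ⟨x, h⟩).2

lemma jn_subtypePerm (f : Equiv.Perm β) (h : ∀ x, p x ↔ p (f x))
    (h' : ∀ x, ¬ p x ↔ ¬ p (f x)) :
    jn p (f.subtypePerm (fun x => (h x).symm), f.subtypePerm (fun x => (h' x).symm)) = f := by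
  ext x
  by_cases hx : p x
  · rw [jn_left p _ hx]; rfl
  · rw [jn_right p _ hx]; rfl

lemma FPFI_jn (ab : Equiv.Perm {x // p x} × Equiv.Perm {x // ¬ p x}) :
    FPFI (jn p ab) ↔ FPFI ab.1 ∧ FPFI ab.2 := by
  constructor
  · rintro ⟨h1, h2⟩
    have hmul : ab.1 * ab.1 = 1 ∧ ab.2 * ab.2 = 1 := by
      have : jn p (ab * ab) = jn p 1 := by
        rw [map_mul, map_one, h1]
      have := jn_injective p this
      exact ⟨congrArg Prod.fst this, congrArg Prod.snd this⟩
    refine ⟨⟨hmul.1, fun y hy => ?_⟩, ⟨hmul.2, fun y hy => ?_⟩⟩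
    · exact h2 y.1 (by rw [jn_left p _ y.2, Subtype.coe_eta, hy])
    · exact h2 y.1 (by rw [jn_right p _ y.2, Subtype.coe_eta, hy])
  · rintro ⟨⟨h1, h2⟩, ⟨h3, h4⟩⟩
    refine ⟨?_, fun x hx => ?_⟩
    · have hab : ab * ab = 1 := Prod.ext (by simpa using h1) (by simpa using h3)
      rw [← map_mul, hab, map_one]
    · by_cases h : p x
      · rw [jn_left p _ h] at hx
        exact h2 ⟨x, h⟩ (Subtype.ext hx)
      · rw [jn_right p _ h] at hx
        exact h4 ⟨x, h⟩ (Subtype.ext hx)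

end Split

noncomputable def fc (n : ℕ) : ℕ := Nat.card {a : Equiv.Perm (Fin n) // FPFI a}
noncomputable def ic (n : ℕ) : ℕ := Nat.card {a : Equiv.Perm (Fin n) // Indecomposable a ∧ FPFI a}
noncomputable def tc (n : ℕ) : ℕ :=
  Nat.card {P : Equiv.Perm (Fin n) × Equiv.Perm (Fin n) // IsTransitivePair P.1 P.2 ∧ FPFI P.2}

lemma card_sigma' {I : Type*} [Fintype I] (f : I → Type*) [∀ i, Finite (f i)] :
    Nat.card (Σ i, f i) = ∑ i, Nat.card (f i) := by
  classical
  letI : ∀ i, Fintype (f i) := fun i => Fintype.ofFinite _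
  simp [Nat.card_eq_fintype_card]

lemma card_fiber {A : Type*} {I : Type*} [Finite A] [Fintype I] (f : A → I) :
    Nat.card A = ∑ i, Nat.card {x : A // f x = i} := by
  rw [← card_sigma']
  exact Nat.card_congr (Equiv.sigmaFiberEquiv f).symm

lemma fc_zero : fc 0 = 1 := by
  have : Nonempty {a : Equiv.Perm (Fin 0) // FPFI a} :=
    ⟨⟨1, ⟨by simp, fun x => x.elim0⟩⟩⟩
  have : Subsingleton {a : Equiv.Perm (Fin 0) // FPFI a} := by
    constructor
    intro a b
    apply Subtype.ext
    ext x
    exact x.elim0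
  exact Nat.card_unique

lemma ic_one : ic 1 = 0 := by
  have : IsEmpty {a : Equiv.Perm (Fin 1) // Indecomposable a ∧ FPFI a} := by
    constructor
    rintro ⟨a, -, -, h⟩
    exact h 0 (Subsingleton.elim _ _)
  simp [ic]

lemma ic_two : ic 2 = 1 := by
  have key : ∀ a : Equiv.Perm (Fin 2), FPFI a → a = Equiv.swap 0 1 := by
    rintro a ⟨-, h⟩
    ext x
    have h0 := h 0
    have h1 := h 1
    fin_cases x
    · have h2 : a 0 = 1 := by omega
      simp [h2]
    · have h2 : a 1 = 0 := by omega
      simp [h2]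
  have h1 : Nonempty {a : Equiv.Perm (Fin 2) // Indecomposable a ∧ FPFI a} := by
    refine ⟨⟨Equiv.swap 0 1, ?_, ?_, ?_⟩⟩
    · intro p hp1 hp2
      have : p = 1 := by omega
      subst this
      exact ⟨0, by simp, by decide⟩
    · exact Equiv.swap_mul_self _ _
    · intro x
      fin_cases x <;> decide
  have h2 : Subsingleton {a : Equiv.Perm (Fin 2) // Indecomposable a ∧ FPFI a} := by
    constructor
    rintro ⟨a, -, ha⟩ ⟨b, -, hb⟩
    exact Subtype.ext ((key a ha).trans (key b hb).symm)
  exact Nat.card_unique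

section L1

lemma fiber_L1 {n : ℕ} (x₀ : Fin (n+2)) (hx₀ : x₀ ≠ 0) :
    Nat.card {a : {a : Equiv.Perm (Fin (n+2)) // FPFI a} // a.1 0 = x₀} = fc n := by
  classical
  set p : Fin (n+2) → Prop := fun u => u = 0 ∨ u = x₀ with hp
  have hne : (⟨0, Or.inl rfl⟩ : {u // p u}) ≠ ⟨x₀, Or.inr rfl⟩ := by
    intro h
    exact hx₀ (congrArg Subtype.val h).symm
  set sw : Equiv.Perm {u // p u} := Equiv.swap ⟨0, Or.inl rfl⟩ ⟨x₀, Or.inr rfl⟩ with hsw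
  have hswF : FPFI sw := by
    refine ⟨Equiv.swap_mul_self _ _, ?_⟩
    rintro ⟨u, hu⟩ h
    rcases hu with rfl | rfl
    · rw [hsw, Equiv.swap_apply_left] at h
      exact hne h.symm
    · rw [hsw, Equiv.swap_apply_right] at h
      exact hne h
  set t : Finset (Fin (n+2)) := ({0, x₀} : Finset (Fin (n+2)))ᶜ with ht
  have htc : t.card = n := by
    rw [ht, Finset.card_compl,
      Finset.card_insert_of_notMem (by simp [Ne.symm hx₀]), Finset.card_singleton]
    simp
  have e1 : {u : Fin (n+2) // ¬ p u} ≃ {u // u ∈ t} := Equiv.subtypeEquivRight (by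
    intro u
    rw [ht, hp]
    simp [not_or])
  set eB : {u : Fin (n+2) // ¬ p u} ≃ Fin n := e1.trans (t.orderIsoOfFin htc).toEquiv.symm
    with heB
  set G : {b : Equiv.Perm (Fin n) // FPFI b} → Equiv.Perm (Fin (n+2)) :=
    fun b => jn p (sw, (pcongr eB).symm b.1) with hG
  have hGF : ∀ b, FPFI (G b) := by
    intro b
    refine (FPFI_jn p _).2 ⟨hswF, ?_⟩
    rw [pcongr_symm]
    exact (FPFI_pcongr eB.symm b.1).2 b.2
  have hG0 : ∀ b, G b 0 = x₀ := by
    intro b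
    rw [hG]
    rw [jn_left p _ (Or.inl rfl : p 0)]
    show ((sw ⟨0, Or.inl rfl⟩ : {u // p u}) : Fin (n+2)) = x₀
    rw [hsw, Equiv.swap_apply_left]
  have hsurj : ∀ P : {a : {a : Equiv.Perm (Fin (n+2)) // FPFI a} // a.1 0 = x₀},
      ∃ b, G b = P.1.1 := by
    rintro ⟨⟨A, hA⟩, hfa⟩
    have ha0 : A 0 = x₀ := hfa
    have hinv : ∀ z, A (A z) = z := by
      intro z
      have := congrArg (fun π : Equiv.Perm (Fin (n+2)) => π z) hA.1
      simpa using this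
    have hax : A x₀ = 0 := by rw [← ha0, hinv]
    have hpp : ∀ u, p u ↔ p (A u) := by
      intro u
      constructor
      · rintro (h | h)
        · rw [h, ha0]; exact Or.inr rfl
        · rw [h, hax]; exact Or.inl rfl
      · rintro (h | h)
        · right
          rw [← hinv u, h, ha0]
        · left
          exact A.injective (h.trans ha0.symm)
    have hnn : ∀ u, ¬ p u ↔ ¬ p (A u) := fun u => not_congr (hpp u)
    have decomp : jn p (A.subtypePerm (fun x => (hpp x).symm), A.subtypePerm (fun x => (hnn x).symm)) = A :=
      jn_subtypePerm p A hpp hnn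
    have hswa : A.subtypePerm (fun x => (hpp x).symm) = sw := by
      refine Equiv.ext fun z => Subtype.ext ?_
      show A z.1 = ((sw z : {u // p u}) : Fin (n+2))
      rcases z.2 with h | h
      · rw [show z = (⟨0, Or.inl rfl⟩ : {u // p u}) from Subtype.ext h, hsw,
          Equiv.swap_apply_left]
        exact ha0
      · rw [show z = (⟨x₀, Or.inr rfl⟩ : {u // p u}) from Subtype.ext h, hsw,
          Equiv.swap_apply_right]
        exact hax
    have hFb : FPFI (jn p (A.subtypePerm (fun x => (hpp x).symm), A.subtypePerm (fun x => (hnn x).symm))) := by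
      rw [decomp]; exact hA
    have hb' : FPFI (A.subtypePerm (fun x => (hnn x).symm)) := ((FPFI_jn p _).1 hFb).2
    refine ⟨⟨pcongr eB (A.subtypePerm (fun x => (hnn x).symm)), (FPFI_pcongr eB _).2 hb'⟩, ?_⟩
    show jn p (sw, (pcongr eB).symm (pcongr eB (A.subtypePerm (fun x => (hnn x).symm)))) = A
    rw [MulEquiv.symm_apply_apply, ← hswa]
    exact decomp
  refine (Nat.card_eq_of_bijective
    (fun b => (⟨⟨G b, hGF b⟩, hG0 b⟩ :
      {a : {a : Equiv.Perm (Fin (n+2)) // FPFI a} // a.1 0 = x₀})) ⟨?_, ?_⟩).symm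
  · intro b1 b2 h
    have h' : G b1 = G b2 := congrArg (fun z => z.1.1) h
    rw [hG] at h'
    have h2 := jn_injective p h'
    have h3 : (pcongr eB).symm b1.1 = (pcongr eB).symm b2.1 := congrArg Prod.snd h2
    exact Subtype.ext ((pcongr eB).symm.injective h3)
  · rintro ⟨⟨A, hA⟩, hfa⟩
    obtain ⟨b, hb⟩ := hsurj ⟨⟨A, hA⟩, hfa⟩
    exact ⟨b, Subtype.ext (Subtype.ext hb)⟩

lemma fc_rec (n : ℕ) : fc (n + 2) = (n + 1) * fc n := by
  classical
  rw [fc, card_fiber (I := {x : Fin (n+2) // x ≠ 0})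
    (fun a : {a : Equiv.Perm (Fin (n+2)) // FPFI a} =>
      (⟨a.1 0, a.2.2 0⟩ : {x : Fin (n+2) // x ≠ 0}))]
  have hfib : ∀ x₀ : {x : Fin (n+2) // x ≠ 0},
      Nat.card {a : {a : Equiv.Perm (Fin (n+2)) // FPFI a} //
        (⟨a.1 0, a.2.2 0⟩ : {x : Fin (n+2) // x ≠ 0}) = x₀} = fc n := by
    rintro ⟨x₀, hx₀⟩
    rw [← fiber_L1 x₀ hx₀]
    apply Nat.card_congr
    exact Equiv.subtypeEquivRight (fun a => by
      rw [Subtype.ext_iff])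
  rw [Finset.sum_congr rfl (fun x₀ _ => hfib x₀)]
  rw [Finset.sum_const, smul_eq_mul, Finset.card_univ, Fintype.card_subtype_compl]
  simp

end L1


section L2

/-- relabeling an initial segment -/
def segA {n : ℕ} (k : ℕ) (hk : k ≤ n) : {x : Fin n // (x : ℕ) < k} ≃ Fin k where
  toFun x := ⟨x.1.1, x.2⟩
  invFun j := ⟨⟨j.1, lt_of_lt_of_le j.2 hk⟩, j.2⟩
  left_inv x := Subtype.ext (Fin.ext rfl)
  right_inv j := rfl

/-- relabeling the complement of an initial segment -/
def segB {n : ℕ} (k : ℕ) (hk : k ≤ n) : {x : Fin n // ¬ (x : ℕ) < k} ≃ Fin (n - k) where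
  toFun x := ⟨x.1.1 - k, by have h1 := x.1.2; have h2 := x.2; omega⟩
  invFun j := ⟨⟨j.1 + k, by have := j.2; omega⟩, by show ¬ j.1 + k < k; omega⟩
  left_inv x := Subtype.ext (Fin.ext (by have h2 := x.2; simp; omega))
  right_inv j := Fin.ext (by simp)

/-- the size of the minimal invariant initial segment -/
noncomputable def mb {n : ℕ} (hn : 1 ≤ n) (a : Equiv.Perm (Fin n)) : ℕ :=
  Nat.find (p := fun q => 1 ≤ q ∧ ∀ x : Fin n, (x : ℕ) < q → ((a x : ℕ) < q))
    ⟨n, hn, fun x _ => (a x).2⟩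

lemma mb_pos {n : ℕ} (hn : 1 ≤ n) (a : Equiv.Perm (Fin n)) : 1 ≤ mb hn a :=
  (Nat.find_spec (p := fun q => 1 ≤ q ∧ ∀ x : Fin n, (x : ℕ) < q → ((a x : ℕ) < q))
    ⟨n, hn, fun x _ => (a x).2⟩).1

lemma mb_le {n : ℕ} (hn : 1 ≤ n) (a : Equiv.Perm (Fin n)) : mb hn a ≤ n :=
  Nat.find_le ⟨hn, fun x _ => (a x).2⟩

lemma mb_spec {n : ℕ} (hn : 1 ≤ n) (a : Equiv.Perm (Fin n)) :
    ∀ x : Fin n, (x : ℕ) < mb hn a → ((a x : ℕ) < mb hn a) :=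
  (Nat.find_spec (p := fun q => 1 ≤ q ∧ ∀ x : Fin n, (x : ℕ) < q → ((a x : ℕ) < q))
    ⟨n, hn, fun x _ => (a x).2⟩).2

lemma mb_min {n : ℕ} (hn : 1 ≤ n) (a : Equiv.Perm (Fin n)) {m : ℕ} (hm : m < mb hn a) :
    ¬ (1 ≤ m ∧ ∀ x : Fin n, (x : ℕ) < m → ((a x : ℕ) < m)) :=
  Nat.find_min _ hm

lemma mb_eq_iff {n : ℕ} (hn : 1 ≤ n) (a : Equiv.Perm (Fin n)) (k : ℕ) :
    mb hn a = k ↔ (1 ≤ k ∧ ∀ x : Fin n, (x : ℕ) < k → ((a x : ℕ) < k)) ∧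
      ∀ m < k, ¬ (1 ≤ m ∧ ∀ x : Fin n, (x : ℕ) < m → ((a x : ℕ) < m)) :=
  Nat.find_eq_iff _

lemma fiber_L2 {n : ℕ} (hn : 1 ≤ n) (k : ℕ) (hk1 : 1 ≤ k) (hk : k ≤ n) :
    Nat.card {a : {a : Equiv.Perm (Fin n) // FPFI a} // mb hn a.1 = k} = ic k * fc (n - k) := by
  classical
  set p : Fin n → Prop := fun x => (x : ℕ) < k with hp
  set eA := segA k hk with heA
  set eB := segB k hk with heB
  set G : {a : Equiv.Perm (Fin k) // Indecomposable a ∧ FPFI a} ×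
      {b : Equiv.Perm (Fin (n - k)) // FPFI b} → Equiv.Perm (Fin n) :=
    fun ab => jn p ((pcongr eA).symm ab.1.1, (pcongr eB).symm ab.2.1) with hG
  have hGlt : ∀ ab (x : Fin n) (hx : (x : ℕ) < k),
      ((G ab x : Fin n) : ℕ) = ((ab.1.1 ⟨(x : ℕ), hx⟩ : Fin k) : ℕ) := by
    intro ab x hx
    rw [hG]
    rw [jn_left p _ hx]
    rfl
  have hGge : ∀ ab (x : Fin n) (hx : ¬ (x : ℕ) < k),
      ((G ab x : Fin n) : ℕ) = ((ab.2.1 ⟨(x : ℕ) - k, by have := x.2; omega⟩ : Fin (n-k)) : ℕ) + k := by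
    intro ab x hx
    rw [hG]
    rw [jn_right p _ hx]
    rfl
  have hGF : ∀ ab, FPFI (G ab) := by
    intro ab
    refine (FPFI_jn p _).2 ⟨?_, ?_⟩
    · rw [pcongr_symm]
      exact (FPFI_pcongr eA.symm _).2 ab.1.2.2
    · rw [pcongr_symm]
      exact (FPFI_pcongr eB.symm _).2 ab.2.2
  have hGmb : ∀ ab, mb hn (G ab) = k := by
    intro ab
    rw [mb_eq_iff]
    refine ⟨⟨hk1, fun x hx => ?_⟩, ?_⟩
    · rw [hGlt ab x hx]
      exact (ab.1.1 ⟨(x : ℕ), hx⟩).2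
    · intro m hm hcon
      obtain ⟨hm1, hm2⟩ := hcon
      obtain ⟨i, hi1, hi2⟩ := ab.1.2.1 m hm1 hm
      set x : Fin n := ⟨i.1, lt_of_lt_of_le i.2 hk⟩ with hx
      have h3 := hm2 x hi1
      rw [hGlt ab x (lt_of_lt_of_le i.2 (le_refl k))] at h3
      have hix : (⟨(x : ℕ), i.2⟩ : Fin k) = i := Fin.ext rfl
      rw [hix] at h3
      omega
  rw [ic, fc, ← Nat.card_prod]
  refine (Nat.card_eq_of_bijective
    (fun ab => (⟨⟨G ab, hGF ab⟩, hGmb ab⟩ :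
      {a : {a : Equiv.Perm (Fin n) // FPFI a} // mb hn a.1 = k})) ⟨?_, ?_⟩).symm
  · intro ab1 ab2 h
    have h' : G ab1 = G ab2 := congrArg (fun z => z.1.1) h
    rw [hG] at h'
    have h2 := jn_injective p h'
    refine Prod.ext (Subtype.ext ?_) (Subtype.ext ?_)
    · exact (pcongr eA).symm.injective (congrArg Prod.fst h2)
    · exact (pcongr eB).symm.injective (congrArg Prod.snd h2)
  · rintro ⟨⟨A, hA⟩, hfa⟩
    have hinv : ∀ z, A (A z) = z := by
      intro z
      have := congrArg (fun π : Equiv.Perm (Fin n) => π z) hA.1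
      simpa using this
    have hseg : ∀ x : Fin n, (x : ℕ) < k → ((A x : ℕ) < k) := by
      intro x hx
      have := mb_spec hn A x
      rw [hfa] at this
      exact this hx
    have hpp : ∀ x, p x ↔ p (A x) := by
      intro x
      constructor
      · exact hseg x
      · intro h
        have := hseg (A x) h
        rwa [hinv x] at this
    have hnn : ∀ x, ¬ p x ↔ ¬ p (A x) := fun x => not_congr (hpp x)
    have decomp : jn p (A.subtypePerm (fun x => (hpp x).symm), A.subtypePerm (fun x => (hnn x).symm)) = A :=
      jn_subtypePerm p A hpp hnn
    have hFd : FPFI (jn p (A.subtypePerm (fun x => (hpp x).symm), A.subtypePerm (fun x => (hnn x).symm))) := by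
      rw [decomp]; exact hA
    have hFa : FPFI (A.subtypePerm (fun x => (hpp x).symm)) := ((FPFI_jn p _).1 hFd).1
    have hFb : FPFI (A.subtypePerm (fun x => (hnn x).symm)) := ((FPFI_jn p _).1 hFd).2
    set a' : Equiv.Perm (Fin k) := pcongr eA (A.subtypePerm (fun x => (hpp x).symm)) with ha'
    set b' : Equiv.Perm (Fin (n - k)) := pcongr eB (A.subtypePerm (fun x => (hnn x).symm)) with hb'
    have ha'app : ∀ j : Fin k, ((a' j : Fin k) : ℕ) = ((A ⟨j.1, lt_of_lt_of_le j.2 hk⟩ : Fin n) : ℕ) := by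
      intro j
      rfl
    have hind : Indecomposable a' := by
      intro q hq1 hq2
      have hmin := mb_min hn A (m := q) (by rw [hfa]; exact hq2)
      rw [not_and_or] at hmin
      rcases hmin with h | h
      · exact absurd hq1 h
      · push_neg at h
        obtain ⟨x, hx1, hx2⟩ := h
        refine ⟨⟨x.1, lt_of_lt_of_le hx1 (le_of_lt hq2)⟩, hx1, ?_⟩
        rw [ha'app]
        have : (⟨x.1, _⟩ : Fin n) = x := Fin.ext rfl
        rw [this]
        omega
    refine ⟨(⟨a', hind, (FPFI_pcongr eA _).2 hFa⟩, ⟨b', (FPFI_pcongr eB _).2 hFb⟩), ?_⟩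
    apply Subtype.ext
    apply Subtype.ext
    show G _ = A
    rw [hG]
    show jn p ((pcongr eA).symm (pcongr eA (A.subtypePerm (fun x => (hpp x).symm))),
      (pcongr eB).symm (pcongr eB (A.subtypePerm (fun x => (hnn x).symm)))) = A
    rw [MulEquiv.symm_apply_apply, MulEquiv.symm_apply_apply]
    exact decomp

lemma fc_sum {n : ℕ} (hn : 1 ≤ n) : fc n = ∑ k ∈ Finset.Icc 1 n, ic k * fc (n - k) := by
  classical
  rw [fc, card_fiber (I := {k // k ∈ Finset.Icc 1 n})
    (fun a : {a : Equiv.Perm (Fin n) // FPFI a} =>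
      (⟨mb hn a.1, Finset.mem_Icc.2 ⟨mb_pos hn a.1, mb_le hn a.1⟩⟩ : {k // k ∈ Finset.Icc 1 n}))]
  rw [← Finset.sum_coe_sort (Finset.Icc 1 n) (fun k => ic k * fc (n - k))]
  refine Finset.sum_congr rfl ?_
  intro kk _
  obtain ⟨hk1, hk2⟩ := Finset.mem_Icc.1 kk.2
  rw [← fiber_L2 hn kk.1 hk1 hk2]
  apply Nat.card_congr
  exact Equiv.subtypeEquivRight (fun a => by
    rw [Subtype.ext_iff])

end L2


section L3

/-- the subgroup of permutations preserving a predicate -/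
def presSub {β : Type*} (p : β → Prop) : Subgroup (Equiv.Perm β) where
  carrier := {π | ∀ x, p x ↔ p (π x)}
  mul_mem' := by
    intro a b ha hb x
    exact (hb x).trans (ha (b x))
  one_mem' := fun x => Iff.rfl
  inv_mem' := by
    intro a ha x
    have := ha (a⁻¹ x)
    simp only [Equiv.Perm.inv_def, Equiv.apply_symm_apply] at this
    exact this.symm

lemma closure_pres {β : Type*} (p : β → Prop) (σ α : Equiv.Perm β)
    (hσ : ∀ x, p x ↔ p (σ x)) (hα : ∀ x, p x ↔ p (α x)) :
    ∀ g ∈ Subgroup.closure ({σ, α} : Set (Equiv.Perm β)), ∀ x, p x ↔ p (g x) := by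
  intro g hg
  refine (Subgroup.closure_le (presSub p)).2 ?_ hg
  rintro y (rfl | rfl)
  · exact hσ
  · exact hα

lemma map_closure_mem {G H : Type*} [Group G] [Group H] (f : G →* H) (T : Set G) {g : G}
    (hg : g ∈ Subgroup.closure T) : f g ∈ Subgroup.closure (f '' T) := by
  rw [← MonoidHom.map_closure]
  exact Subgroup.mem_map_of_mem f hg

lemma prod_lift_closure {G H : Type*} [Group G] [Group H] (a1 a2 : G) (b1 b2 : H) :
    ∀ g ∈ Subgroup.closure ({a1, a2} : Set G),
      ∃ h, (g, h) ∈ Subgroup.closure ({(a1, b1), (a2, b2)} : Set (G × H)) := by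
  intro g hg
  induction hg using Subgroup.closure_induction with
  | mem x hx =>
    rcases hx with rfl | rfl
    · exact ⟨b1, Subgroup.subset_closure (Or.inl rfl)⟩
    · exact ⟨b2, Subgroup.subset_closure (Or.inr rfl)⟩
  | one => exact ⟨1, one_mem _⟩
  | mul x y hx hy ihx ihy =>
    obtain ⟨h1, hh1⟩ := ihx
    obtain ⟨h2, hh2⟩ := ihy
    exact ⟨h1 * h2, mul_mem hh1 hh2⟩
  | inv x hx ihx =>
    obtain ⟨h1, hh1⟩ := ihx
    exact ⟨h1⁻¹, inv_mem hh1⟩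

lemma res_mem_closure {β : Type*} (p : β → Prop) (σ α : Equiv.Perm β)
    (hσ : ∀ x, p x ↔ p (σ x)) (hα : ∀ x, p x ↔ p (α x)) :
    ∀ g ∈ Subgroup.closure ({σ, α} : Set (Equiv.Perm β)), ∀ (hg : ∀ x, p x ↔ p (g x)),
      g.subtypePerm (fun x => (hg x).symm) ∈ Subgroup.closure
        ({σ.subtypePerm (fun x => (hσ x).symm), α.subtypePerm (fun x => (hα x).symm)} : Set (Equiv.Perm {x // p x})) := by
  intro g hgmem
  induction hgmem using Subgroup.closure_induction with
  | mem x hx =>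
    intro hg
    rcases hx with rfl | rfl
    · exact Subgroup.subset_closure (Or.inl rfl)
    · exact Subgroup.subset_closure (Or.inr rfl)
  | one =>
    intro hg
    rw [Equiv.Perm.subtypePerm_one]
    exact one_mem _
  | mul x y hx hy ihx ihy =>
    intro hg
    have hxp := closure_pres p σ α hσ hα x hx
    have hyp := closure_pres p σ α hσ hα y hy
    have : (x * y).subtypePerm (fun x => (hg x).symm) = x.subtypePerm (fun x => (hxp x).symm) * y.subtypePerm (fun x => (hyp x).symm) := by
      rw [Equiv.Perm.subtypePerm_mul]
    rw [this]
    exact mul_mem (ihx hxp) (ihy hyp)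
  | inv x hx ihx =>
    intro hg
    have hxp := closure_pres p σ α hσ hα x hx
    have : (x⁻¹).subtypePerm (fun x => (hg x).symm) = (x.subtypePerm (fun x => (hxp x).symm))⁻¹ := by
      rw [Equiv.Perm.inv_subtypePerm]
    rw [this]
    exact inv_mem (ihx hxp)

open scoped Classical in
/-- the orbit of 0 as a finset -/
noncomputable def orbF {n : ℕ} (hn : 1 ≤ n) (σ α : Equiv.Perm (Fin n)) : Finset (Fin n) :=
  Finset.univ.filter
    (fun x => ∃ g ∈ Subgroup.closure ({σ, α} : Set (Equiv.Perm (Fin n))), g ⟨0, hn⟩ = x)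

lemma mem_orbF {n : ℕ} (hn : 1 ≤ n) (σ α : Equiv.Perm (Fin n)) (x : Fin n) :
    x ∈ orbF hn σ α ↔
      ∃ g ∈ Subgroup.closure ({σ, α} : Set (Equiv.Perm (Fin n))), g ⟨0, hn⟩ = x := by
  classical
  simp [orbF]

lemma orbF_zero_mem {n : ℕ} (hn : 1 ≤ n) (σ α : Equiv.Perm (Fin n)) :
    (⟨0, hn⟩ : Fin n) ∈ orbF hn σ α :=
  (mem_orbF hn σ α _).2 ⟨1, one_mem _, rfl⟩

lemma orbF_inv {n : ℕ} (hn : 1 ≤ n) (σ α : Equiv.Perm (Fin n)) (x : Fin n) :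
    x ∈ orbF hn σ α ↔ σ x ∈ orbF hn σ α := by
  rw [mem_orbF, mem_orbF]
  constructor
  · rintro ⟨g, hg, rfl⟩
    exact ⟨σ * g, mul_mem (Subgroup.subset_closure (Or.inl rfl)) hg, rfl⟩
  · rintro ⟨g, hg, hgx⟩
    refine ⟨σ⁻¹ * g, mul_mem (inv_mem (Subgroup.subset_closure (Or.inl rfl))) hg, ?_⟩
    rw [Equiv.Perm.mul_apply, hgx]
    simp

lemma orbF_inv' {n : ℕ} (hn : 1 ≤ n) (σ α : Equiv.Perm (Fin n)) (x : Fin n) :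
    x ∈ orbF hn σ α ↔ α x ∈ orbF hn σ α := by
  rw [mem_orbF, mem_orbF]
  constructor
  · rintro ⟨g, hg, rfl⟩
    exact ⟨α * g, mul_mem (Subgroup.subset_closure (Or.inr rfl)) hg, rfl⟩
  · rintro ⟨g, hg, hgx⟩
    refine ⟨α⁻¹ * g, mul_mem (inv_mem (Subgroup.subset_closure (Or.inr rfl))) hg, ?_⟩
    rw [Equiv.Perm.mul_apply, hgx]
    simp

lemma card_pairs (m : ℕ) :
    Nat.card {R : Equiv.Perm (Fin m) × Equiv.Perm (Fin m) // FPFI R.2} =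
      m.factorial * fc m := by
  have e : {R : Equiv.Perm (Fin m) × Equiv.Perm (Fin m) // FPFI R.2} ≃
      Equiv.Perm (Fin m) × {b : Equiv.Perm (Fin m) // FPFI b} :=
    { toFun := fun R => (R.1.1, ⟨R.1.2, R.2⟩)
      invFun := fun R => ⟨(R.1, R.2.1), R.2.2⟩
      left_inv := fun R => rfl
      right_inv := fun R => rfl }
  rw [Nat.card_congr e, Nat.card_prod, fc]
  congr 1
  rw [Nat.card_eq_fintype_card, Fintype.card_perm, Fintype.card_fin]

lemma fiber_L3 {n : ℕ} (hn : 1 ≤ n) (s : Finset (Fin n)) (h0 : (⟨0, hn⟩ : Fin n) ∈ s) :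
    Nat.card {P : {P : Equiv.Perm (Fin n) × Equiv.Perm (Fin n) // FPFI P.2} //
        orbF hn P.1.1 P.1.2 = s} =
      tc s.card * Nat.card {R : Equiv.Perm (Fin (n - s.card)) ×
        Equiv.Perm (Fin (n - s.card)) // FPFI R.2} := by
  classical
  set k := s.card with hkdef
  have hk : k ≤ n := le_trans (Finset.card_le_univ s) (by simp)
  set p : Fin n → Prop := fun x => x ∈ s with hp
  set eA : {x // p x} ≃ Fin k := (s.orderIsoOfFin rfl).toEquiv.symm with heA
  set t : Finset (Fin n) := sᶜ with htdef
  have htc : t.card = n - k := by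
    rw [htdef, Finset.card_compl]
    simp [hkdef]
  have e1 : {x : Fin n // ¬ p x} ≃ {x // x ∈ t} := Equiv.subtypeEquivRight (by
    intro x
    rw [htdef, hp]
    simp)
  set eB : {x : Fin n // ¬ p x} ≃ Fin (n - k) := e1.trans (t.orderIsoOfFin htc).toEquiv.symm
    with heB
  set J : Equiv.Perm (Fin k) × Equiv.Perm (Fin (n - k)) →* Equiv.Perm (Fin n) :=
    (jn p).comp (((pcongr eA).symm.toMonoidHom).prodMap ((pcongr eB).symm.toMonoidHom)) with hJ
  have hJapp : ∀ ab, J ab = jn p ((pcongr eA).symm ab.1, (pcongr eB).symm ab.2) := fun ab => rfl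
  have hJinj : Function.Injective J := by
    intro ab cd h
    rw [hJapp, hJapp] at h
    have h2 := jn_injective p h
    refine Prod.ext ?_ ?_
    · exact (pcongr eA).symm.injective (congrArg Prod.fst h2)
    · exact (pcongr eB).symm.injective (congrArg Prod.snd h2)
  have hJpres : ∀ ab, ∀ x, p x ↔ p (J ab x) := by
    intro ab x
    rw [hJapp]
    exact (jn_pres p _ x).symm
  have hJleft : ∀ ab (x : Fin n) (hx : p x),
      J ab x = (eA.symm (ab.1 (eA ⟨x, hx⟩)) : Fin n) := by
    intro ab x hx
    rw [hJapp, jn_left p _ hx]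
    rfl
  -- the gluing map
  set G : ({Q : Equiv.Perm (Fin k) × Equiv.Perm (Fin k) //
      IsTransitivePair Q.1 Q.2 ∧ FPFI Q.2} ×
    {R : Equiv.Perm (Fin (n - k)) × Equiv.Perm (Fin (n - k)) // FPFI R.2}) →
      Equiv.Perm (Fin n) × Equiv.Perm (Fin n) :=
    fun QR => (J (QR.1.1.1, QR.2.1.1), J (QR.1.1.2, QR.2.1.2)) with hG
  have hGF : ∀ QR, FPFI (G QR).2 := by
    intro QR
    show FPFI (J (QR.1.1.2, QR.2.1.2))
    rw [hJapp]
    refine (FPFI_jn p _).2 ⟨?_, ?_⟩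
    · rw [pcongr_symm]
      exact (FPFI_pcongr eA.symm _).2 QR.1.2.2
    · rw [pcongr_symm]
      exact (FPFI_pcongr eB.symm _).2 QR.2.2
  have himage : ∀ QR, ⇑J '' {(QR.1.1.1, QR.2.1.1), (QR.1.1.2, QR.2.1.2)} =
      {(G QR).1, (G QR).2} := by
    intro QR
    rw [Set.image_insert_eq, Set.image_singleton]
  have hGorb : ∀ QR, orbF hn (G QR).1 (G QR).2 = s := by
    intro QR
    ext x
    rw [mem_orbF]
    constructor
    · rintro ⟨g, hg, rfl⟩
      have hpres := closure_pres p (G QR).1 (G QR).2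
        (hJpres (QR.1.1.1, QR.2.1.1)) (hJpres (QR.1.1.2, QR.2.1.2)) g hg
      exact (hpres ⟨0, hn⟩).1 h0
    · intro hx
      obtain ⟨g', hg', hg'eq⟩ := QR.1.2.1 (eA ⟨⟨0, hn⟩, h0⟩) (eA ⟨x, hx⟩)
      obtain ⟨h', hh'⟩ := prod_lift_closure QR.1.1.1 QR.1.1.2 QR.2.1.1 QR.2.1.2 g' hg'
      refine ⟨J (g', h'), ?_, ?_⟩
      · have := map_closure_mem J _ hh'
        rwa [himage QR] at this
      · rw [hJleft (g', h') ⟨0, hn⟩ h0]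
        show (eA.symm (g' (eA ⟨⟨0, hn⟩, h0⟩)) : Fin n) = x
        rw [hg'eq]
        simp
  rw [tc, ← Nat.card_prod]
  refine (Nat.card_eq_of_bijective
    (fun QR => (⟨⟨G QR, hGF QR⟩, hGorb QR⟩ :
      {P : {P : Equiv.Perm (Fin n) × Equiv.Perm (Fin n) // FPFI P.2} //
        orbF hn P.1.1 P.1.2 = s})) ⟨?_, ?_⟩).symm
  · intro QR1 QR2 h
    have h' : G QR1 = G QR2 := congrArg (fun z => z.1.1) h
    rw [hG] at h'
    have e1' := hJinj (congrArg Prod.fst h')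
    have e2' := hJinj (congrArg Prod.snd h')
    have f1 := congrArg Prod.fst e1'
    have f2 := congrArg Prod.fst e2'
    have s1 := congrArg Prod.snd e1'
    have s2 := congrArg Prod.snd e2'
    exact Prod.ext (Subtype.ext (Prod.ext f1 f2)) (Subtype.ext (Prod.ext s1 s2))
  · rintro ⟨⟨P, hFP⟩, horb⟩
    have hσp : ∀ x, p x ↔ p (P.1 x) := by
      intro x
      show x ∈ s ↔ P.1 x ∈ s
      rw [← horb]
      exact orbF_inv hn P.1 P.2 x
    have hαp : ∀ x, p x ↔ p (P.2 x) := by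
      intro x
      show x ∈ s ↔ P.2 x ∈ s
      rw [← horb]
      exact orbF_inv' hn P.1 P.2 x
    have hσn : ∀ x, ¬ p x ↔ ¬ p (P.1 x) := fun x => not_congr (hσp x)
    have hαn : ∀ x, ¬ p x ↔ ¬ p (P.2 x) := fun x => not_congr (hαp x)
    set σA := pcongr eA (P.1.subtypePerm (fun x => (hσp x).symm)) with hσA
    set αA := pcongr eA (P.2.subtypePerm (fun x => (hαp x).symm)) with hαA
    set σB := pcongr eB (P.1.subtypePerm (fun x => (hσn x).symm)) with hσB
    set αB := pcongr eB (P.2.subtypePerm (fun x => (hαn x).symm)) with hαB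
    have decompσ : J (σA, σB) = P.1 := by
      rw [hJapp]
      show jn p ((pcongr eA).symm (pcongr eA (P.1.subtypePerm (fun x => (hσp x).symm))),
        (pcongr eB).symm (pcongr eB (P.1.subtypePerm (fun x => (hσn x).symm)))) = P.1
      rw [MulEquiv.symm_apply_apply, MulEquiv.symm_apply_apply]
      exact jn_subtypePerm p P.1 hσp hσn
    have decompα : J (αA, αB) = P.2 := by
      rw [hJapp]
      show jn p ((pcongr eA).symm (pcongr eA (P.2.subtypePerm (fun x => (hαp x).symm))),
        (pcongr eB).symm (pcongr eB (P.2.subtypePerm (fun x => (hαn x).symm)))) = P.2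
      rw [MulEquiv.symm_apply_apply, MulEquiv.symm_apply_apply]
      exact jn_subtypePerm p P.2 hαp hαn
    have hFd : FPFI (jn p (P.2.subtypePerm (fun x => (hαp x).symm), P.2.subtypePerm (fun x => (hαn x).symm))) := by
      rw [jn_subtypePerm p P.2 hαp hαn]
      exact hFP
    have hFA : FPFI αA := (FPFI_pcongr eA _).2 ((FPFI_jn p _).1 hFd).1
    have hFB : FPFI αB := (FPFI_pcongr eB _).2 ((FPFI_jn p _).1 hFd).2
    have htrans : IsTransitivePair σA αA := by
      intro u v
      have hxmem : (eA.symm u : {x // p x}).1 ∈ orbF hn P.1 P.2 := by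
        rw [horb]
        exact (eA.symm u).2
      have hymem : (eA.symm v : {x // p x}).1 ∈ orbF hn P.1 P.2 := by
        rw [horb]
        exact (eA.symm v).2
      obtain ⟨g1, hg1mem, hg1⟩ := (mem_orbF hn P.1 P.2 _).1 hxmem
      obtain ⟨g2, hg2mem, hg2⟩ := (mem_orbF hn P.1 P.2 _).1 hymem
      have hgmem : g2 * g1⁻¹ ∈ Subgroup.closure ({P.1, P.2} : Set (Equiv.Perm (Fin n))) :=
        mul_mem hg2mem (inv_mem hg1mem)
      have hgx : (g2 * g1⁻¹) (eA.symm u : {x // p x}).1 = (eA.symm v : {x // p x}).1 := by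
        rw [Equiv.Perm.mul_apply, ← hg1]
        simp [hg2]
      have hgp := closure_pres p P.1 P.2 hσp hαp (g2 * g1⁻¹) hgmem
      have hres := res_mem_closure p P.1 P.2 hσp hαp (g2 * g1⁻¹) hgmem hgp
      have hmap := map_closure_mem (pcongr eA).toMonoidHom _ hres
      rw [Set.image_insert_eq, Set.image_singleton] at hmap
      refine ⟨pcongr eA ((g2 * g1⁻¹).subtypePerm (fun x => (hgp x).symm)), hmap, ?_⟩
      rw [pcongr_apply]
      have : (g2 * g1⁻¹).subtypePerm (fun x => (hgp x).symm) (eA.symm u) = eA.symm v := by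
        apply Subtype.ext
        exact hgx
      rw [this]
      simp
    refine ⟨(⟨(σA, αA), htrans, hFA⟩, ⟨(σB, αB), hFB⟩), ?_⟩
    apply Subtype.ext
    apply Subtype.ext
    show (J (σA, σB), J (αA, αB)) = P
    exact Prod.ext decompσ decompα

end L3


lemma count_subsets {n : ℕ} (hn : 1 ≤ n) {k : ℕ} (hk1 : 1 ≤ k) :
    (Finset.univ.filter
      (fun s : Finset (Fin n) => (⟨0, hn⟩ : Fin n) ∈ s ∧ s.card = k)).card =
      (n - 1).choose (k - 1) := by
  classical
  set z0 : Fin n := ⟨0, hn⟩ with hz0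
  have hcard : (Finset.univ.erase z0).card = n - 1 := by
    rw [Finset.card_erase_of_mem (Finset.mem_univ _), Finset.card_univ, Fintype.card_fin]
  rw [← hcard, ← Finset.card_powersetCard]
  refine Finset.card_bij' (fun s _ => s.erase z0) (fun t _ => insert z0 t) ?_ ?_ ?_ ?_
  · intro s hs
    obtain ⟨-, hmem, hcard⟩ := Finset.mem_filter.1 hs
    rw [Finset.mem_powersetCard]
    refine ⟨Finset.erase_subset_erase z0 (Finset.subset_univ s), ?_⟩
    rw [Finset.card_erase_of_mem hmem, hcard]
  · intro t ht
    rw [Finset.mem_powersetCard] at ht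
    obtain ⟨hsub, hcard⟩ := ht
    have hz0t : z0 ∉ t := by
      intro h
      have := hsub h
      rw [Finset.mem_erase] at this
      exact this.1 rfl
    rw [Finset.mem_filter]
    refine ⟨Finset.mem_univ _, Finset.mem_insert_self _ _, ?_⟩
    rw [Finset.card_insert_of_notMem hz0t, hcard]
    omega
  · intro s hs
    obtain ⟨-, hmem, -⟩ := Finset.mem_filter.1 hs
    exact Finset.insert_erase hmem
  · intro t ht
    rw [Finset.mem_powersetCard] at ht
    have hz0t : z0 ∉ t := by
      intro h
      have := ht.1 h
      rw [Finset.mem_erase] at this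
      exact this.1 rfl
    exact Finset.erase_insert hz0t

lemma tc_sum {n : ℕ} (hn : 1 ≤ n) :
    n.factorial * fc n =
      ∑ k ∈ Finset.Icc 1 n,
        (n - 1).choose (k - 1) * (tc k * ((n - k).factorial * fc (n - k))) := by
  classical
  set z0 : Fin n := ⟨0, hn⟩ with hz0
  set f : Finset (Fin n) → ℕ :=
    fun s => tc s.card * ((n - s.card).factorial * fc (n - s.card)) with hf
  rw [← card_pairs n]
  rw [card_fiber (I := {s : Finset (Fin n) // z0 ∈ s})
    (fun P : {P : Equiv.Perm (Fin n) × Equiv.Perm (Fin n) // FPFI P.2} =>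
      (⟨orbF hn P.1.1 P.1.2, orbF_zero_mem hn P.1.1 P.1.2⟩ : {s : Finset (Fin n) // z0 ∈ s}))]
  have hfib : ∀ ss : {s : Finset (Fin n) // z0 ∈ s},
      Nat.card {P : {P : Equiv.Perm (Fin n) × Equiv.Perm (Fin n) // FPFI P.2} //
        (⟨orbF hn P.1.1 P.1.2, orbF_zero_mem hn P.1.1 P.1.2⟩ : {s : Finset (Fin n) // z0 ∈ s})
          = ss} = f ss.1 := by
    rintro ⟨s, hs⟩
    have e := Equiv.subtypeEquivRight
      (p := fun P : {P : Equiv.Perm (Fin n) × Equiv.Perm (Fin n) // FPFI P.2} =>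
        (⟨orbF hn P.1.1 P.1.2, orbF_zero_mem hn P.1.1 P.1.2⟩ : {s : Finset (Fin n) // z0 ∈ s})
          = ⟨s, hs⟩)
      (q := fun P : {P : Equiv.Perm (Fin n) × Equiv.Perm (Fin n) // FPFI P.2} =>
        orbF hn P.1.1 P.1.2 = s)
      (fun P => Iff.intro (fun h => congrArg Subtype.val h) (fun h => Subtype.ext h))
    rw [Nat.card_congr e, fiber_L3 hn s hs, hf, card_pairs]
  rw [Finset.sum_congr rfl (fun ss _ => hfib ss)]
  set T : Finset (Finset (Fin n)) := Finset.univ.filter (fun s => z0 ∈ s) with hT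
  have hTmem : ∀ s, s ∈ T ↔ z0 ∈ s := by
    intro s
    rw [hT, Finset.mem_filter]
    simp
  have h2 : ∑ ss : {s : Finset (Fin n) // z0 ∈ s}, f ss.1 = ∑ s ∈ T, f s :=
    (Finset.sum_subtype T hTmem f).symm
  rw [h2]
  have h3 : ∀ s ∈ T, s.card ∈ Finset.Icc 1 n := by
    intro s hs
    rw [Finset.mem_Icc]
    constructor
    · exact Finset.card_pos.2 ⟨z0, (hTmem s).1 hs⟩
    · exact le_trans (Finset.card_le_univ s) (by simp)
  rw [← Finset.sum_fiberwise_of_maps_to h3 f]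
  refine Finset.sum_congr rfl (fun k hk => ?_)
  obtain ⟨hk1, hk2⟩ := Finset.mem_Icc.1 hk
  have hconst : ∀ s ∈ T.filter (fun s => s.card = k),
      f s = tc k * ((n - k).factorial * fc (n - k)) := by
    intro s hs
    have hck : s.card = k := (Finset.mem_filter.1 hs).2
    simp only [hf, hck]
  rw [Finset.sum_congr rfl hconst, Finset.sum_const, smul_eq_mul]
  congr 1
  rw [← count_subsets hn hk1]
  congr 1
  rw [hT, Finset.filter_filter]

lemma main_identity : ∀ n, 1 ≤ n → tc n = (n - 1).factorial * ic (n + 2) := by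
  intro n
  induction n using Nat.strong_induction_on with
  | _ n ih =>
  intro hn
  have L3 := tc_sum hn
  -- split off the k = n term
  have hsplit : Finset.Icc 1 n = insert n (Finset.Icc 1 (n - 1)) := by
    ext m
    simp only [Finset.mem_Icc, Finset.mem_insert]
    omega
  rw [hsplit, Finset.sum_insert (by simp; omega)] at L3
  have hterm : (n - 1).choose (n - 1) * (tc n * ((n - n).factorial * fc (n - n))) = tc n := by
    rw [Nat.choose_self, Nat.sub_self, fc_zero]
    simp [Nat.factorial]
  rw [hterm] at L3
  have hih : ∀ k ∈ Finset.Icc 1 (n - 1),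
      (n - 1).choose (k - 1) * (tc k * ((n - k).factorial * fc (n - k))) =
        (n - 1).factorial * (ic (k + 2) * fc (n - k)) := by
    intro k hk
    obtain ⟨hk1, hk2⟩ := Finset.mem_Icc.1 hk
    rw [ih k (by omega) hk1]
    have hchoose : (n - 1).choose (k - 1) * (k - 1).factorial * (n - k).factorial =
        (n - 1).factorial := by
      have := Nat.choose_mul_factorial_mul_factorial (n := n - 1) (k := k - 1) (by omega)
      rw [show n - 1 - (k - 1) = n - k by omega] at this
      exact this
    calc (n - 1).choose (k - 1) * ((k - 1).factorial * ic (k + 2) * ((n - k).factorial * fc (n - k)))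
        = ((n - 1).choose (k - 1) * (k - 1).factorial * (n - k).factorial) * (ic (k + 2) * fc (n - k)) := by ring
      _ = (n - 1).factorial * (ic (k + 2) * fc (n - k)) := by rw [hchoose]
  rw [Finset.sum_congr rfl hih, ← Finset.mul_sum] at L3
  -- the involution recursion at n + 2
  have L2 := fc_sum (n := n + 2) (by omega)
  have hsplit2 : Finset.Icc 1 (n + 2) = insert 1 (insert 2 (Finset.Icc 3 (n + 2))) := by
    ext m
    simp only [Finset.mem_Icc, Finset.mem_insert]
    omega
  rw [hsplit2, Finset.sum_insert (by simp), Finset.sum_insert (by simp)] at L2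
  rw [ic_one, ic_two] at L2
  have hre : ∑ k ∈ Finset.Icc 3 (n + 2), ic k * fc (n + 2 - k) =
      ∑ j ∈ Finset.Icc 1 n, ic (j + 2) * fc (n - j) := by
    refine Finset.sum_bij' (fun k _ => k - 2) (fun j _ => j + 2) ?_ ?_ ?_ ?_ ?_
    · intro k hk
      obtain ⟨h1, h2⟩ := Finset.mem_Icc.1 hk
      simp only [Finset.mem_Icc]
      omega
    · intro j hj
      obtain ⟨h1, h2⟩ := Finset.mem_Icc.1 hj
      simp only [Finset.mem_Icc]
      omega
    · intro k hk
      obtain ⟨h1, h2⟩ := Finset.mem_Icc.1 hk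
      show k - 2 + 2 = k
      omega
    · intro j hj
      show j + 2 - 2 = j
      omega
    · intro k hk
      obtain ⟨h1, h2⟩ := Finset.mem_Icc.1 hk
      show ic k * fc (n + 2 - k) = ic (k - 2 + 2) * fc (n - (k - 2))
      have e1 : k - 2 + 2 = k := by omega
      have e2 : n - (k - 2) = n + 2 - k := by omega
      rw [e1, e2]
  rw [hre] at L2
  rw [hsplit, Finset.sum_insert (by simp; omega)] at L2
  have hlast : ic (n + 2) * fc (n - n) = ic (n + 2) := by
    rw [Nat.sub_self, fc_zero, mul_one]
  rw [hlast] at L2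
  simp only [zero_mul, one_mul, zero_add, Nat.add_sub_cancel] at L2
  -- L2 : fc (n+2) = 0 + (fc n + (ic (n+2) + ∑ ...))
  have L1 := fc_rec n
  set S := ∑ i ∈ Finset.Icc 1 (n - 1), ic (i + 2) * fc (n - i) with hS
  have key : n * fc n = ic (n + 2) + S := by
    have h1 : (n + 1) * fc n = fc n + (ic (n + 2) + S) := by
      rw [← L1, L2]
    have h2 : (n + 1) * fc n = fc n + n * fc n := by ring
    omega
  have e1 : n.factorial * fc n = (n - 1).factorial * S + (n - 1).factorial * ic (n + 2) := by
    have hfact : n.factorial = n * (n - 1).factorial := by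
      rw [Nat.mul_factorial_pred (by omega)]
    rw [hfact]
    have : n * (n - 1).factorial * fc n = (n - 1).factorial * (n * fc n) := by ring
    rw [this, key]
    ring
  omega

theorem main_final (m : ℕ) (hm : 1 ≤ m) :
    tc (2 * m) = Nat.factorial (2 * m - 1) * ic (2 * m + 2) :=
  main_identity (2 * m) (by omega)

end LMaux

theorem labeled_maps_eq_factorial_mul_indec_involutions (m : ℕ) (hm : 1 ≤ m) :
    Nat.card {P : Equiv.Perm (Fin (2 * m)) × Equiv.Perm (Fin (2 * m)) //
        IsTransitivePair P.1 P.2 ∧ P.2 * P.2 = 1 ∧ ∀ x, P.2 x ≠ x} =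
      Nat.factorial (2 * m - 1) * numIndecFPFInv (m + 1) := by
  have h := LMaux.main_final m hm
  have h2 : numIndecFPFInv (m + 1) = LMaux.ic (2 * m + 2) := by
    have e : 2 * (m + 1) = 2 * m + 2 := by ring
    unfold numIndecFPFInv
    rw [e]
    rfl
  rw [h2]
  exact h
end
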